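/- For $F(u) = \frac{1}{4}u^2(1-u)^2$, $F_i(u) = \frac{3}{8}u^2$, $F_e(u) = \frac{1}{4}u^4 - \frac{1}{2}u^3 - \frac{1}{8}u^2$, and $f(a,b) = F_i'(a) + F_e'(b) = \frac{1}{4}(3a + 4b^3 - 6b^2 - b)$, it holds that $F(a) - F(b) \le f(a,b)(a-b)$ for all $a, b \in [0,1]$. -/
import Mathlib


/-- Convex-splitting inequality for the Ginzburg--Landau double-well potential
`F(u) = u^2 (1-u)^2 / 4` with splitting approximation
`f(a,b) = (3a + 4b^3 - 6b^2 - b)/4`: for all `a, b ∈ [0,1]`,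
`F(a) - F(b) ≤ f(a,b) (a - b)`. -/
theorem double_well_convex_splitting_inequality :
    ∀ a ∈ Set.Icc (0 : ℝ) 1, ∀ b ∈ Set.Icc (0 : ℝ) 1,
      a ^ 2 * (1 - a) ^ 2 / 4 - b ^ 2 * (1 - b) ^ 2 / 4 ≤
        (3 * a + 4 * b ^ 3 - 6 * b ^ 2 - b) / 4 * (a - b) := by
  rintro a ⟨ha0, ha1⟩ b ⟨hb0, hb1⟩
  nlinarith [sq_nonneg (a-b), sq_nonneg (a+b-1), sq_nonneg (a+b), mul_nonneg ha0 hb0,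
    mul_nonneg (sub_nonneg.2 ha1) (sub_nonneg.2 hb1),
    mul_nonneg (mul_nonneg ha0 hb0) (sq_nonneg (a-b)),
    mul_nonneg (mul_nonneg (sub_nonneg.2 ha1) (sub_nonneg.2 hb1)) (sq_nonneg (a-b)),
    mul_nonneg (sub_nonneg.2 ha1) (sq_nonneg (a-b)),
    mul_nonneg ha0 (sq_nonneg (a-b)),
    mul_nonneg (sub_nonneg.2 hb1) (sq_nonneg (a-b)),
    mul_nonneg hb0 (sq_nonneg (a-b))]
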